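/- Let P = { x₀ + l₁x₁ + ⋯ + l_d x_d : |l_j| ≤ L_j for all j } be a generalized arithmetic progression of integers with positive integer side lengths L_j. Let k ≥ 1 be an integer, δ ∈ (0, 1/6^d), and set ρ = 1 − 3δ^{1/d}; assume ρ ≥ 1/2. Define Q_k = { k x₀ + l₁x₁ + ⋯ + l_d x_d : |l_j| ≤ ρ k L_j for all j }. Then for every n ∈ Q_k, the number of k-tuples (p₁,…,p_k) ∈ (P as a multiset of lattice-parameter points)^k with p₁+⋯+p_k = n, counted as r_{kP}(n) = #{(l^{(1)},…,l^{(k)}) : each |l^{(i)}_j| ≤ L_j, and the corresponding elements sum to n}, satisfies r_{kP}(n) ≥ (δ|P|)^{k−1}, where |P| denotes the number of lattice parameter tuples ∏_j(2L_j+1). -/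

import Mathlib

open Finset Classical in
private lemma cardA (L : ℕ) (hL : 0 < L) (k : ℕ) (hk : 1 ≤ k) (ε : ℝ) (hε : 0 < ε)
    (hε6 : ε < 1/6) (hρ2 : (1:ℝ)/2 ≤ 1 - 3*ε) (m : ℤ)
    (hm : |(m:ℝ)| ≤ (1 - 3*ε)*((k:ℝ)+1)*(L:ℝ)) :
    ε * (2*(L:ℝ)+1) ≤ (((Finset.Icc (-(L:ℤ)) L).filter
      (fun l : ℤ => |(m:ℝ) - (l:ℝ)| ≤ (1 - 3*ε)*(k:ℝ)*(L:ℝ))).card : ℝ) := by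
  set R : ℝ := (1 - 3*ε)*(k:ℝ)*(L:ℝ) with hR
  have hL1 : (1:ℝ) ≤ L := by exact_mod_cast hL
  have hk1 : (1:ℝ) ≤ k := by exact_mod_cast hk
  have hR2 : (L:ℝ)/2 ≤ R := by
    have h1 : (1/2:ℝ) * 1 ≤ (1-3*ε) * (k:ℝ) :=
      mul_le_mul hρ2 hk1 (by norm_num) (by linarith)
    have h2 := mul_le_mul_of_nonneg_right h1 (by linarith : (0:ℝ) ≤ (L:ℝ))
    rw [hR]; nlinarith
  have hfl : ((⌊R⌋:ℝ)) ≤ R := Int.floor_le R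
  have hfl' : R < (⌊R⌋:ℝ) + 1 := Int.lt_floor_add_one R
  have hfl0 : (0:ℤ) ≤ ⌊R⌋ := Int.floor_nonneg.2 (by nlinarith)
  have hfl0R : (0:ℝ) ≤ (⌊R⌋:ℝ) := by exact_mod_cast hfl0
  have hm1 : (m:ℝ) ≤ R + (1-3*ε)*(L:ℝ) := by
    have h := (abs_le.1 hm).2; nlinarith
  have hm2 : -(R + (1-3*ε)*(L:ℝ)) ≤ (m:ℝ) := by
    have h := (abs_le.1 hm).1; nlinarith
  set a : ℤ := max (-(L:ℤ)) (m - ⌊R⌋) with ha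
  set b : ℤ := min (L:ℤ) (m + ⌊R⌋) with hb
  have hkey : ε * (2*(L:ℝ)+1) ≤ ((b:ℝ) - (a:ℝ) + 1) := by
    rcases le_or_gt (m + ⌊R⌋) (L:ℤ) with h1 | h1 <;>
      rcases le_or_gt (-(L:ℤ)) (m - ⌊R⌋) with h2 | h2
    · rw [hb, min_eq_right h1, ha, max_eq_right h2]
      push_cast
      rcases le_or_gt L 1 with hL2 | hL2
      · have hLeq : L = 1 := le_antisymm hL2 hL
        subst hLeq
        push_cast
        nlinarith
      · have hL2' : (2:ℝ) ≤ (L:ℝ) := by exact_mod_cast hL2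
        nlinarith
    · rw [hb, min_eq_right h1, ha, max_eq_left h2.le]
      push_cast
      nlinarith [mul_nonneg hε.le (by linarith : (0:ℝ) ≤ (L:ℝ) - 1)]
    · rw [hb, min_eq_left h1.le, ha, max_eq_right h2]
      push_cast
      nlinarith [mul_nonneg hε.le (by linarith : (0:ℝ) ≤ (L:ℝ) - 1)]
    · rw [hb, min_eq_left h1.le, ha, max_eq_left h2.le]
      push_cast
      nlinarith
  have hpos : (0:ℝ) < ε * (2*(L:ℝ)+1) := by positivity
  have hab : a ≤ b := by
    by_contra hcon
    push_neg at hcon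
    have h1 : (b:ℝ) + 1 ≤ (a:ℝ) := by exact_mod_cast hcon
    linarith
  have hsub : Finset.Icc a b ⊆ (Finset.Icc (-(L:ℤ)) L).filter
      (fun l : ℤ => |(m:ℝ) - (l:ℝ)| ≤ R) := by
    intro l hl
    rw [Finset.mem_Icc] at hl
    rw [Finset.mem_filter, Finset.mem_Icc]
    refine ⟨⟨le_trans (le_max_left _ _) hl.1, le_trans hl.2 (min_le_left _ _)⟩, ?_⟩
    rw [abs_le]
    constructor
    · have h1 : (l:ℝ) ≤ (b:ℝ) := by exact_mod_cast hl.2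
      have h2 : (b:ℝ) ≤ (m:ℝ) + (⌊R⌋:ℝ) := by exact_mod_cast min_le_right (L:ℤ) (m + ⌊R⌋)
      linarith
    · have h1 : (a:ℝ) ≤ (l:ℝ) := by exact_mod_cast hl.1
      have h2 : (m:ℝ) - (⌊R⌋:ℝ) ≤ (a:ℝ) := by exact_mod_cast le_max_right (-(L:ℤ)) (m - ⌊R⌋)
      linarith
  have hcard : ((Finset.Icc a b).card : ℝ) = (b:ℝ) - (a:ℝ) + 1 := by
    have h : ((Finset.Icc a b).card : ℤ) = b + 1 - a := by
      rw [Int.card_Icc]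
      exact Int.toNat_of_nonneg (by omega)
    have := congrArg (fun z : ℤ => (z:ℝ)) h
    push_cast at this
    linarith
  calc ε * (2*(L:ℝ)+1) ≤ (b:ℝ) - (a:ℝ) + 1 := hkey
    _ = ((Finset.Icc a b).card : ℝ) := hcard.symm
    _ ≤ _ := by exact_mod_cast Finset.card_le_card hsub

open Finset Classical in
private lemma keylem (d : ℕ) (hd : 1 ≤ d) (x₀ : ℤ) (xv : Fin d → ℤ)
    (L : Fin d → ℕ) (hL : ∀ j, 0 < L j) (ε : ℝ) (hε : 0 < ε) (hε6 : ε < 1/6)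
    (hρ : (1:ℝ)/2 ≤ 1 - 3*ε) (k : ℕ) (hk : 1 ≤ k) :
    ∀ n : ℤ, ∀ m : Fin d → ℤ,
      (∀ j, |(m j : ℝ)| ≤ (1 - 3*ε) * k * L j) →
      n = k * x₀ + ∑ j, m j * xv j →
      (((Fintype.piFinset fun _ : Fin k =>
            Fintype.piFinset fun j : Fin d => Finset.Icc (-(L j : ℤ)) (L j)).filter
          (fun l => (k : ℤ) * x₀ + ∑ i, ∑ j, l i j * xv j = n)).card : ℝ) ≥
        (ε^d * ∏ j, (2 * (L j : ℝ) + 1)) ^ (k - 1) := by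
  induction k, hk using Nat.le_induction with
  | base =>
    intro n m hm hn
    have hmem : (fun _ : Fin 1 => m) ∈ (Fintype.piFinset fun _ : Fin 1 =>
        Fintype.piFinset fun j : Fin d => Finset.Icc (-(L j : ℤ)) (L j)).filter
        (fun l => ((1:ℕ) : ℤ) * x₀ + ∑ i, ∑ j, l i j * xv j = n) := by
      rw [Finset.mem_filter]
      constructor
      · rw [Fintype.mem_piFinset]
        intro i
        rw [Fintype.mem_piFinset]
        intro j
        rw [Finset.mem_Icc]
        have h1 := hm j
        have h2 : |(m j : ℝ)| ≤ (L j : ℝ) := by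
          refine h1.trans ?_
          have h3 : (0:ℝ) ≤ (L j : ℝ) := Nat.cast_nonneg _
          have h4 : (0:ℝ) ≤ ε * (L j : ℝ) := mul_nonneg hε.le h3
          push_cast
          nlinarith
        have h3 : |m j| ≤ (L j : ℤ) := by
          have h4 : ((|m j| : ℤ) : ℝ) ≤ ((L j : ℤ) : ℝ) := by push_cast; push_cast at h2; exact h2
          exact_mod_cast h4
        exact abs_le.1 h3
      · simpa [Fin.sum_univ_one] using hn.symm
    have hpos : 1 ≤ ((Fintype.piFinset fun _ : Fin 1 =>
        Fintype.piFinset fun j : Fin d => Finset.Icc (-(L j : ℤ)) (L j)).filter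
        (fun l => ((1:ℕ) : ℤ) * x₀ + ∑ i, ∑ j, l i j * xv j = n)).card :=
      Finset.card_pos.2 ⟨_, hmem⟩
    have h0 : (1:ℕ) - 1 = 0 := rfl
    rw [h0, pow_zero]
    exact_mod_cast hpos
  | succ k hk ih =>
    intro n m hm hn
    have hC : (0:ℝ) < ε^d * ∏ j, (2*(L j:ℝ)+1) := by
      apply mul_pos (pow_pos hε d)
      apply Finset.prod_pos
      intro j _
      have : (0:ℝ) ≤ (L j:ℝ) := Nat.cast_nonneg _
      linarith
    set S : Finset (Fin d → ℤ) := Fintype.piFinset fun j =>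
      (Finset.Icc (-(L j:ℤ)) (L j)).filter
        (fun l : ℤ => |(m j : ℝ) - (l:ℝ)| ≤ (1 - 3*ε)*(k:ℝ)*(L j:ℝ)) with hS
    have hScard : ε^d * ∏ j, (2*(L j:ℝ)+1) ≤ (S.card : ℝ) := by
      rw [hS, Fintype.card_piFinset, Nat.cast_prod]
      have heq : ε^d * ∏ j, (2*(L j:ℝ)+1) = ∏ j, (ε * (2*(L j:ℝ)+1)) := by
        rw [Finset.prod_mul_distrib, Finset.prod_const, Finset.card_univ, Fintype.card_fin]
      rw [heq]
      apply Finset.prod_le_prod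
      · intro j _
        positivity
      · intro j _
        apply cardA (L j) (hL j) k hk ε hε hε6 hρ (m j)
        have h := hm j
        push_cast at h ⊢
        exact h
    have hmem_S : ∀ l ∈ S, (∀ j, l j ∈ Finset.Icc (-(L j:ℤ)) (L j)) ∧
        (∀ j, |(m j:ℝ) - (l j:ℝ)| ≤ (1-3*ε)*(k:ℝ)*(L j:ℝ)) := by
      intro l hl
      rw [hS, Fintype.mem_piFinset] at hl
      exact ⟨fun j => (Finset.mem_filter.1 (hl j)).1, fun j => (Finset.mem_filter.1 (hl j)).2⟩
    set T : ℤ → Finset (Fin k → Fin d → ℤ) := fun n' =>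
      (Fintype.piFinset fun _ : Fin k =>
        Fintype.piFinset fun j : Fin d => Finset.Icc (-(L j : ℤ)) (L j)).filter
        (fun l => (k:ℤ) * x₀ + ∑ i, ∑ j, l i j * xv j = n') with hT
    set N : (Fin d → ℤ) → ℤ := fun l => n - (x₀ + ∑ j, l j * xv j) with hN
    have key2 : (S.sigma fun l => T (N l)).card ≤
        ((Fintype.piFinset fun _ : Fin (k+1) =>
            Fintype.piFinset fun j : Fin d => Finset.Icc (-(L j : ℤ)) (L j)).filter
          (fun l => ((k+1 : ℕ) : ℤ) * x₀ + ∑ i, ∑ j, l i j * xv j = n)).card := by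
      apply Finset.card_le_card_of_injOn (fun p => Fin.snoc p.2 p.1)
      · rintro ⟨l, g⟩ hp
        rw [Finset.mem_coe, Finset.mem_sigma] at hp
        obtain ⟨hlS, hgT⟩ := hp
        simp only [hT] at hgT
        rw [Finset.mem_filter] at hgT
        obtain ⟨hgB, hgsum⟩ := hgT
        rw [Finset.mem_coe, Finset.mem_filter]; beta_reduce
        constructor
        · rw [Fintype.mem_piFinset]
          intro i
          induction i using Fin.lastCases with
          | last =>
            rw [Fin.snoc_last, Fintype.mem_piFinset]
            exact fun j => (hmem_S l hlS).1 j
          | cast i' =>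
            rw [Fin.snoc_castSucc]
            rw [Fintype.mem_piFinset] at hgB
            exact hgB i'
        · show ((k+1:ℕ) : ℤ) * x₀ + ∑ i : Fin (k+1), ∑ j, (Fin.snoc g l : Fin (k+1) → Fin d → ℤ) i j * xv j = n
          rw [Fin.sum_univ_castSucc]
          simp only [Fin.snoc_castSucc, Fin.snoc_last]
          simp only [hN] at hgsum
          push_cast
          push_cast at hgsum
          linarith [hgsum]
      · rintro ⟨l₁, g₁⟩ h₁ ⟨l₂, g₂⟩ h₂ heq
        simp only at heq
        have hl : l₁ = l₂ := by
          have h := congrFun heq (Fin.last k)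
          simpa [Fin.snoc_last] using h
        have hg : g₁ = g₂ := by
          funext i
          have h := congrFun heq (Fin.castSucc i)
          simpa [Fin.snoc_castSucc] using h
        subst hl
        subst hg
        rfl
    have hsum2 : ∀ l ∈ S, ((ε^d * ∏ j, (2*(L j:ℝ)+1)) ^ (k-1)) ≤ ((T (N l)).card : ℝ) := by
      intro l hl
      have h1 := (hmem_S l hl).2
      apply ih (N l) (fun j => m j - l j)
      · intro j
        push_cast
        have h2 := h1 j
        convert h2 using 2
      · simp only [hN]
        rw [hn]
        simp only [sub_mul]
        rw [Finset.sum_sub_distrib]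
        push_cast
        ring
    calc (((Fintype.piFinset fun _ : Fin (k+1) =>
            Fintype.piFinset fun j : Fin d => Finset.Icc (-(L j : ℤ)) (L j)).filter
          (fun l => ((k+1 : ℕ) : ℤ) * x₀ + ∑ i, ∑ j, l i j * xv j = n)).card : ℝ)
        ≥ ((S.sigma fun l => T (N l)).card : ℝ) := by exact_mod_cast key2
      _ = ∑ l ∈ S, ((T (N l)).card : ℝ) := by rw [Finset.card_sigma]; push_cast; rfl
      _ ≥ ∑ _l ∈ S, (ε^d * ∏ j, (2*(L j:ℝ)+1)) ^ (k-1) := by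
          apply Finset.sum_le_sum
          intro l hl
          exact hsum2 l hl
      _ = (S.card : ℝ) * (ε^d * ∏ j, (2*(L j:ℝ)+1)) ^ (k-1) := by
          rw [Finset.sum_const, nsmul_eq_mul]
      _ ≥ (ε^d * ∏ j, (2*(L j:ℝ)+1)) * (ε^d * ∏ j, (2*(L j:ℝ)+1)) ^ (k-1) :=
          mul_le_mul_of_nonneg_right hScard (le_of_lt (pow_pos hC _))
      _ = (ε^d * ∏ j, (2*(L j:ℝ)+1)) ^ (k+1-1) := by
          have h : k + 1 - 1 = (k - 1) + 1 := by
            rw [Nat.succ_sub_one, Nat.sub_add_cancel hk]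
          rw [h, pow_succ']

open Finset Classical in
theorem stmt_5 (d : ℕ) (hd : 1 ≤ d) (x₀ : ℤ) (xv : Fin d → ℤ)
    (L : Fin d → ℕ) (hL : ∀ j, 0 < L j)
    (k : ℕ) (hk : 1 ≤ k) (δ : ℝ) (hδ : 0 < δ) (hδ' : δ < 1 / 6 ^ d)
    (hρ : (1 : ℝ) / 2 ≤ 1 - 3 * δ ^ ((1 : ℝ) / d))
    (n : ℤ)
    (hn : ∃ l : Fin d → ℤ, (∀ j, |(l j : ℝ)| ≤ (1 - 3 * δ ^ ((1 : ℝ) / d)) * k * L j) ∧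
      n = k * x₀ + ∑ j, l j * xv j) :
    (((Fintype.piFinset fun _ : Fin k =>
          Fintype.piFinset fun j : Fin d => Finset.Icc (-(L j : ℤ)) (L j)).filter
        (fun l => (k : ℤ) * x₀ + ∑ i, ∑ j, l i j * xv j = n)).card : ℝ) ≥
      (δ * ∏ j, (2 * (L j : ℝ) + 1)) ^ (k - 1) := by
  set ε : ℝ := δ ^ ((1:ℝ)/d) with hε_def
  have hdR : (0:ℝ) < d := by exact_mod_cast hd
  have hε : 0 < ε := Real.rpow_pos_of_pos hδ _
  have hεd : ε ^ d = δ := by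
    rw [hε_def, ← Real.rpow_natCast (δ ^ ((1:ℝ)/d)) d, ← Real.rpow_mul hδ.le]
    rw [one_div, inv_mul_cancel₀ (ne_of_gt hdR), Real.rpow_one]
  have hε6 : ε < 1/6 := by
    have h1 : δ < (1/6:ℝ) ^ d := by
      rw [one_div_pow]
      exact hδ'
    have h2 : ε < ((1/6:ℝ)^d) ^ ((1:ℝ)/d) := Real.rpow_lt_rpow hδ.le h1 (by positivity)
    calc ε < ((1/6:ℝ)^d) ^ ((1:ℝ)/d) := h2
      _ = 1/6 := by
        rw [← Real.rpow_natCast (1/6:ℝ) d, ← Real.rpow_mul (by norm_num)]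
        rw [mul_one_div, div_self (ne_of_gt hdR), Real.rpow_one]
  obtain ⟨m, hm1, hm2⟩ := hn
  have h := keylem d hd x₀ xv L hL ε hε hε6 hρ k hk n m hm1 hm2
  rwa [hεd] at h
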